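/- For v ∈ [0, 1/8] and the TP-cell distribution (α, β, γ, δ) = (1 − 8v, v, 3v, 4v), the potency of the experiment measuring p = P(y_x) equals v. That is, (α + δ) − max_{p ∈ [1−8v, 1−v]} W(p) = v, where W is the piecewise width function: W(p) = p on [1−8v, 1−5v], W(p) = 1−5v on [1−5v, 1−4v], W(p) = (2−9v) − p on [1−4v, 1−v]. -/
import Mathlib


open Set

/-- Constructive achievability: for the TP-cell distribution
`(α, β, γ, δ) = (1-8v, v, 3v, 4v)`, the potency of the experiment measuring
`p = P(y_x)` equals `v`: `(α + δ) - max_{p ∈ [1-8v,1-v]} W(p) = v`. -/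
theorem tp_cell_potency (v : ℝ) (hv : v ∈ Set.Icc (0 : ℝ) (1/8))
    (W : ℝ → ℝ)
    (h1 : ∀ p ∈ Set.Icc (1 - 8*v) (1 - 5*v), W p = p)
    (h2 : ∀ p ∈ Set.Icc (1 - 5*v) (1 - 4*v), W p = 1 - 5*v)
    (h3 : ∀ p ∈ Set.Icc (1 - 4*v) (1 - v), W p = (2 - 9*v) - p) :
    ((1 - 8*v) + 4*v) - sSup (W '' Set.Icc (1 - 8*v) (1 - v)) = v := by
  obtain ⟨hv0, hv1⟩ := hv
  have hsup : sSup (W '' Set.Icc (1 - 8*v) (1 - v)) = 1 - 5*v := by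
    apply IsGreatest.csSup_eq
    constructor
    · exact ⟨1 - 5*v, ⟨by linarith, by linarith⟩,
        h2 _ ⟨le_refl _, by linarith⟩⟩
    · rintro y ⟨p, ⟨hp1, hp2⟩, rfl⟩
      rcases le_or_gt p (1 - 5*v) with h | h
      · rw [h1 p ⟨hp1, h⟩]; exact h
      · rcases le_or_gt p (1 - 4*v) with h' | h'
        · rw [h2 p ⟨h.le, h'⟩]
        · rw [h3 p ⟨h'.le, hp2⟩]; linarith
  rw [hsup]; ring
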